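/- Let p, q : ℝ → ℝ → ℝ be functions of (x, t) that are twice differentiable in x and differentiable in t and satisfy p_t = −½ p_{xx} + p²q and q_t = ½ q_{xx} − pq² at every point. For λ ∈ ℝ define the 4×4 matrices U_new = [[−2λ, p, p, 0],[q, 0, 0, p],[q, 0, 0, p],[0, q, q, 2λ]] and V_new = [[−2λ² + pq, λp − p_x/2, λp − p_x/2, 0],[λq + q_x/2, 0, 0, λp − p_x/2],[λq + q_x/2, 0, 0, λp − p_x/2],[0, λq + q_x/2, λq + q_x/2, 2λ² − pq]]. Then the continuous zero curvature equation ∂_t U_new − ∂_x V_new + [U_new, V_new] = 0 holds at every point (x,t) for every λ ∈ ℝ. -/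

import Mathlib

open Matrix

set_option maxHeartbeats 1600000 in
/-- The 4×4 Kronecker-sum zero curvature representation of the nonlinear
Schrödinger-type system: if `pₜ = -½ pₓₓ + p²q` and `qₜ = ½ qₓₓ - pq²`, then
`U_new = U ⊗ I₂ + I₂ ⊗ U` and `V_new = V ⊗ I₂ + I₂ ⊗ V` (written out as explicit
4×4 matrices) satisfy `∂ₜU_new - ∂ₓV_new + [U_new, V_new] = 0` for all `λ, x, t`.
Arguments are `(x, t)`; partial derivatives are taken entrywise via `deriv`. -/
theorem nls_kronecker_zero_curvature
    (p q : ℝ → ℝ → ℝ)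
    -- twice differentiable in x
    (hpx : ∀ t : ℝ, Differentiable ℝ (fun x => p x t))
    (hpxx : ∀ t : ℝ, Differentiable ℝ (deriv (fun x => p x t)))
    (hqx : ∀ t : ℝ, Differentiable ℝ (fun x => q x t))
    (hqxx : ∀ t : ℝ, Differentiable ℝ (deriv (fun x => q x t)))
    -- differentiable in t
    (hpt : ∀ x : ℝ, Differentiable ℝ (fun t => p x t))
    (hqt : ∀ x : ℝ, Differentiable ℝ (fun t => q x t))
    -- the nonlinear Schrödinger-type system
    (hsys : ∀ x t : ℝ,
      deriv (fun s => p x s) t =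
        -(1 / 2) * deriv (deriv (fun y => p y t)) x + (p x t) ^ 2 * q x t ∧
      deriv (fun s => q x s) t =
        (1 / 2) * deriv (deriv (fun y => q y t)) x - p x t * (q x t) ^ 2)
    (Unew Vnew : ℝ → ℝ → ℝ → Matrix (Fin 4) (Fin 4) ℝ)
    (hUnew : ∀ l x t : ℝ, Unew l x t =
      !![-(2 * l), p x t, p x t, 0;
         q x t, 0, 0, p x t;
         q x t, 0, 0, p x t;
         0, q x t, q x t, 2 * l])
    (hVnew : ∀ l x t : ℝ, Vnew l x t =
      !![-(2 * l ^ 2) + p x t * q x t,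
           l * p x t - deriv (fun y => p y t) x / 2,
           l * p x t - deriv (fun y => p y t) x / 2, 0;
         l * q x t + deriv (fun y => q y t) x / 2, 0, 0,
           l * p x t - deriv (fun y => p y t) x / 2;
         l * q x t + deriv (fun y => q y t) x / 2, 0, 0,
           l * p x t - deriv (fun y => p y t) x / 2;
         0, l * q x t + deriv (fun y => q y t) x / 2,
           l * q x t + deriv (fun y => q y t) x / 2,
           2 * l ^ 2 - p x t * q x t]) :
    ∀ l x t : ℝ,
      (Matrix.of fun i j => deriv (fun s => Unew l x s i j) t) -
          (Matrix.of fun i j => deriv (fun y => Vnew l y t i j) x) +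
        (Unew l x t * Vnew l x t - Vnew l x t * Unew l x t) = 0 := by

  intro l x t
  have hpd : HasDerivAt (fun y => p y t) (deriv (fun y => p y t) x) x :=
    ((hpx t) x).hasDerivAt
  have hqd : HasDerivAt (fun y => q y t) (deriv (fun y => q y t) x) x :=
    ((hqx t) x).hasDerivAt
  have hpdd : HasDerivAt (deriv (fun y => p y t)) (deriv (deriv (fun y => p y t)) x) x :=
    ((hpxx t) x).hasDerivAt
  have hqdd : HasDerivAt (deriv (fun y => q y t)) (deriv (deriv (fun y => q y t)) x) x :=
    ((hqxx t) x).hasDerivAt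
  obtain ⟨hps, hqs⟩ := hsys x t
  have dV00 : deriv (fun y => -(2 * l ^ 2) + p y t * q y t) x =
      deriv (fun y => p y t) x * q x t + p x t * deriv (fun y => q y t) x := by
    have := ((hasDerivAt_const x (-(2 * l ^ 2))).add (hpd.mul hqd)).deriv
    simpa [Pi.add_def, Pi.mul_def] using this
  have dV33 : deriv (fun y => 2 * l ^ 2 - p y t * q y t) x =
      -(deriv (fun y => p y t) x * q x t + p x t * deriv (fun y => q y t) x) := by
    have := ((hasDerivAt_const x (2 * l ^ 2)).sub (hpd.mul hqd)).deriv
    simpa [Pi.sub_def, Pi.mul_def] using this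
  have dVp : deriv (fun y => l * p y t - deriv (fun z => p z t) y / 2) x =
      l * deriv (fun y => p y t) x - deriv (deriv (fun y => p y t)) x / 2 :=
    ((hpd.const_mul l).sub (hpdd.div_const 2)).deriv
  have dVq : deriv (fun y => l * q y t + deriv (fun z => q z t) y / 2) x =
      l * deriv (fun y => q y t) x + deriv (deriv (fun y => q y t)) x / 2 :=
    ((hqd.const_mul l).add (hqdd.div_const 2)).deriv
  ext i j
  simp only [hUnew, hVnew]
  fin_cases i <;> fin_cases j <;>
    simp [Matrix.mul_apply, Fin.sum_univ_four, dV00, dV33, dVp, dVq, hps, hqs] <;>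
    ring
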